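/- arXiv:2106.00942 — 2 statements merged into one kernel-verified Lean document; each statement's English description precedes it below -/
import Mathlib

section
/- (Lemma 2, instantaneous regret of a UCB choice) Let χ be a nonempty set, let f, μ, σ : χ → ℝ with σ(x) ≥ 0 for all x, and let β ≥ 0. Suppose |f(x) − μ(x)| ≤ β^{1/2}·σ(x) for all x ∈ χ, and suppose x_t ∈ χ satisfies μ(x_t) + β^{1/2}·σ(x_t) ≥ μ(x) + β^{1/2}·σ(x) for all x ∈ χ. Then for every x* ∈ χ, f(x*) − f(x_t) ≤ 2·β^{1/2}·σ(x_t). -/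
/-- (Lemma 2, instantaneous regret of a UCB choice) If `μ, σ` provide a valid
`β^{1/2}`-confidence envelope for `f` on `χ` and `xt` maximizes the upper confidence
bound `μ + β^{1/2}·σ` over `χ`, then the instantaneous regret `f(x*) − f(xt)` is
bounded by `2·β^{1/2}·σ(xt)`. -/
theorem ucb_instantaneous_regret
    {χ : Type*} [Nonempty χ]
    (f μ σ : χ → ℝ) (β : ℝ) (hβ : 0 ≤ β)
    (hσ : ∀ x, 0 ≤ σ x)
    (hconf : ∀ x, |f x - μ x| ≤ Real.sqrt β * σ x)
    (xt : χ)
    (hmax : ∀ x, μ x + Real.sqrt β * σ x ≤ μ xt + Real.sqrt β * σ xt) :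
    ∀ xstar, f xstar - f xt ≤ 2 * Real.sqrt β * σ xt := by
  intro xstar
  have h1 := abs_le.mp (hconf xstar)
  have h2 := abs_le.mp (hconf xt)
  have h3 := hmax xstar
  linarith
end

section
/- (Discretized UCB regret bound, deterministic core of Lemma 6) Let d ≥ 1, let χ ⊆ ℝ^d be nonempty, let f, μ, σ : χ → ℝ with σ(x) ≥ 0 for all x ∈ χ, and let β ≥ 0, L ≥ 0, ε ≥ 0. Let D ⊆ χ be a set such that for every x ∈ χ there exists y ∈ D with Σ_{j=1}^d |x_j − y_j| ≤ ε. Assume: (i) |f(x) − f(y)| ≤ L·Σ_{j=1}^d |x_j − y_j| for all x, y ∈ χ; (ii) |f(y) − μ(y)| ≤ β^{1/2}·σ(y) for all y ∈ D; (iii) x_t ∈ χ satisfies μ(x_t) + β^{1/2}·σ(x_t) ≥ μ(x) + β^{1/2}·σ(x) for all x ∈ χ; and (iv) |f(x_t) − μ(x_t)| ≤ β^{1/2}·σ(x_t). Then for every x* ∈ χ, f(x*) − f(x_t) ≤ 2·β^{1/2}·σ(x_t) + L·ε. -/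
open Finset in
/-- (Discretized UCB regret bound, deterministic core of Lemma 6) Confidence on a finite
ℓ1-covering `D` of covering radius `ε`, ℓ1-Lipschitz continuity of `f` with constant `L`,
and confidence at the UCB-maximizing query `xt` together bound the instantaneous regret
by `2·β^{1/2}·σ(xt) + L·ε`. -/
theorem discretized_ucb_regret
    (d : ℕ) (hd : 1 ≤ d)
    (χ : Set (Fin d → ℝ)) (hχ : χ.Nonempty)
    (f μ σ : (Fin d → ℝ) → ℝ)
    (hσ : ∀ x ∈ χ, 0 ≤ σ x)
    (β L ε : ℝ) (hβ : 0 ≤ β) (hL : 0 ≤ L) (hε : 0 ≤ ε)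
    (D : Set (Fin d → ℝ)) (hD : D ⊆ χ)
    (hcover : ∀ x ∈ χ, ∃ y ∈ D, ∑ j, |x j - y j| ≤ ε)
    (hlip : ∀ x ∈ χ, ∀ y ∈ χ, |f x - f y| ≤ L * ∑ j, |x j - y j|)
    (hconfD : ∀ y ∈ D, |f y - μ y| ≤ Real.sqrt β * σ y)
    (xt : Fin d → ℝ) (hxt : xt ∈ χ)
    (hmax : ∀ x ∈ χ, μ x + Real.sqrt β * σ x ≤ μ xt + Real.sqrt β * σ xt)
    (hconfxt : |f xt - μ xt| ≤ Real.sqrt β * σ xt) :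
    ∀ xstar ∈ χ, f xstar - f xt ≤ 2 * Real.sqrt β * σ xt + L * ε := by
  intro xstar hxstar
  obtain ⟨y, hyD, hyc⟩ := hcover xstar hxstar
  have hyχ := hD hyD
  have h1 : f xstar - f y ≤ L * ε := by
    calc f xstar - f y ≤ |f xstar - f y| := le_abs_self _
    _ ≤ L * ∑ j, |xstar j - y j| := hlip xstar hxstar y hyχ
    _ ≤ L * ε := by exact mul_le_mul_of_nonneg_left hyc hL
  have h2 : f y ≤ μ y + Real.sqrt β * σ y := by
    have := abs_le.mp (hconfD y hyD); linarith [this.2]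
  have h3 := hmax y hyχ
  have h4 : μ xt - f xt ≤ Real.sqrt β * σ xt := by
    have := abs_le.mp hconfxt; linarith [this.1]
  linarith
end
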